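/- arXiv:2306.09432 — 2 statements merged into one kernel-verified Lean document; each statement's English description precedes it below -/
import Mathlib

section
/- Let ρ and ρ̄ be two matrix product operators of size d^n × d^n with the same bond dimensions, with factors X_ℓ and X̄_ℓ respectively, such that the left unfoldings of the factors of ρ̄ are isometries (Σ_{i_ℓ,j_ℓ} (X̄_ℓ^{i_ℓ,j_ℓ})^H X̄_ℓ^{i_ℓ,j_ℓ} = I_{r_ℓ} for ℓ ≤ n−1), the factors of ρ satisfy the same canonical condition, and for each ℓ the left unfoldings satisfy ‖L(X_ℓ) − L(X̄_ℓ)‖ ≤ ε_ℓ (spectral/Frobenius norm at the last site). Then ‖ρ − ρ̄‖_F² ≤ n · Σ_{ℓ=1}^n r_ℓ ε_ℓ². -/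
open Matrix
open Fin.NatCast

/-- Left partial product of a chain of rectangular matrices. -/
noncomputable def leftProd {N : ℕ} (r : Fin (N + 1) → ℕ)
    (A : ∀ i : Fin N, Matrix (Fin (r i.castSucc)) (Fin (r i.succ)) ℂ)
    (i : Fin (N + 1)) : Matrix (Fin (r 0)) (Fin (r i)) ℂ :=
  Fin.induction (motive := fun i => Matrix (Fin (r 0)) (Fin (r i)) ℂ)
    1 (fun j ih => ih * A j) i

/-- The product `X_1^{i_1,j_1} ⋯ X_n^{i_n,j_n}` of MPO factors. -/
noncomputable def mpoEntry {n d : ℕ} (r : Fin (n + 1) → ℕ)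
    (X : ∀ ℓ : Fin n, Fin d → Fin d → Matrix (Fin (r ℓ.castSucc)) (Fin (r ℓ.succ)) ℂ)
    (i j : Fin n → Fin d) : Matrix (Fin (r 0)) (Fin (r (Fin.last n))) ℂ :=
  leftProd r (fun ℓ => X ℓ (i ℓ) (j ℓ)) (Fin.last n)

/-- The left unfolding `L(X_ℓ)` of an MPO factor: stack the blocks
`X_ℓ^{i,j}` vertically into a `d²r_{ℓ-1} × r_ℓ` matrix. -/
def leftUnfold {d r₁ r₂ : ℕ} (X : Fin d → Fin d → Matrix (Fin r₁) (Fin r₂) ℂ) :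
    Matrix (Fin d × Fin d × Fin r₁) (Fin r₂) ℂ :=
  Matrix.of fun p b => X p.1 p.2.1 p.2.2 b

namespace MpoPerturb

/-- Right partial product. -/
noncomputable def rightProd {N : ℕ} (r : Fin (N + 1) → ℕ)
    (A : ∀ i : Fin N, Matrix (Fin (r i.castSucc)) (Fin (r i.succ)) ℂ)
    (k : Fin (N + 1)) : Matrix (Fin (r k)) (Fin (r (Fin.last N))) ℂ :=
  Fin.reverseInduction (motive := fun k => Matrix (Fin (r k)) (Fin (r (Fin.last N))) ℂ)
    1 (fun j ih => A j * ih) k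

variable {N d : ℕ}

lemma leftProd_zero (r : Fin (N + 1) → ℕ)
    (A : ∀ i : Fin N, Matrix (Fin (r i.castSucc)) (Fin (r i.succ)) ℂ) :
    leftProd r A 0 = 1 := rfl

lemma leftProd_succ (r : Fin (N + 1) → ℕ)
    (A : ∀ i : Fin N, Matrix (Fin (r i.castSucc)) (Fin (r i.succ)) ℂ) (k : Fin N) :
    leftProd r A k.succ = leftProd r A k.castSucc * A k := by
  simp [leftProd]

lemma rightProd_last (r : Fin (N + 1) → ℕ)
    (A : ∀ i : Fin N, Matrix (Fin (r i.castSucc)) (Fin (r i.succ)) ℂ) :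
    rightProd r A (Fin.last N) = 1 := by
  simp [rightProd]

lemma rightProd_castSucc (r : Fin (N + 1) → ℕ)
    (A : ∀ i : Fin N, Matrix (Fin (r i.castSucc)) (Fin (r i.succ)) ℂ) (k : Fin N) :
    rightProd r A k.castSucc = A k * rightProd r A k.succ := by
  simp [rightProd]

lemma leftProd_mul_rightProd (r : Fin (N + 1) → ℕ)
    (A : ∀ i : Fin N, Matrix (Fin (r i.castSucc)) (Fin (r i.succ)) ℂ) (k : Fin (N + 1)) :
    leftProd r A (Fin.last N) = leftProd r A k * rightProd r A k := by
  induction k using Fin.reverseInduction with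
  | last => rw [rightProd_last, Matrix.mul_one]
  | cast k ih => rw [rightProd_castSucc, ← Matrix.mul_assoc, ← leftProd_succ, ih]

lemma fin_telescope {γ : Type*} [AddCommGroup γ] :
    ∀ {M : ℕ} (g : Fin (M + 1) → γ),
      ∑ ℓ : Fin M, (g ℓ.succ - g ℓ.castSucc) = g (Fin.last M) - g 0
  | 0, g => by simp [Fin.last]
  | (M + 1), g => by
      rw [Fin.sum_univ_castSucc]
      have h1 := fin_telescope (fun t : Fin (M + 1) => g t.castSucc)
      simp only [← Fin.succ_castSucc] at h1
      rw [h1, Fin.castSucc_zero, Fin.succ_last]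
      abel

lemma leftProd_congr (r : Fin (N + 1) → ℕ)
    (A B : ∀ i : Fin N, Matrix (Fin (r i.castSucc)) (Fin (r i.succ)) ℂ) (k : Fin (N + 1))
    (h : ∀ s : Fin N, s.val < k.val → A s = B s) :
    leftProd r A k = leftProd r B k := by
  induction k using Fin.induction with
  | zero => rfl
  | succ t ih =>
      have h1 : ∀ s : Fin N, s.val < t.castSucc.val → A s = B s := by
        intro s hs
        apply h s
        rw [Fin.val_succ]
        rw [Fin.coe_castSucc] at hs
        omega
      rw [leftProd_succ, leftProd_succ, ih h1, h t (by rw [Fin.val_succ]; omega)]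

lemma rightProd_congr (r : Fin (N + 1) → ℕ)
    (A B : ∀ i : Fin N, Matrix (Fin (r i.castSucc)) (Fin (r i.succ)) ℂ) (k : Fin (N + 1))
    (h : ∀ s : Fin N, k.val ≤ s.val → A s = B s) :
    rightProd r A k = rightProd r B k := by
  induction k using Fin.reverseInduction with
  | last => rw [rightProd_last, rightProd_last]
  | cast t ih =>
      have h1 : ∀ s : Fin N, t.succ.val ≤ s.val → A s = B s := by
        intro s hs
        apply h s
        rw [Fin.coe_castSucc]
        rw [Fin.val_succ] at hs
        omega
      rw [rightProd_castSucc, rightProd_castSucc, ih h1, h t (by simp)]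

/-- Squared Frobenius norm. -/
noncomputable def sqF {α β : Type*} [Fintype α] [Fintype β] (M : Matrix α β ℂ) : ℝ :=
  ∑ a, ∑ b, ‖M a b‖ ^ 2

lemma sqF_nonneg {α β : Type*} [Fintype α] [Fintype β] (M : Matrix α β ℂ) : 0 ≤ sqF M := by
  apply Finset.sum_nonneg; intros
  apply Finset.sum_nonneg; intros
  positivity

lemma trace_conjTranspose_mul {α β : Type*} [Fintype α] [Fintype β] (M : Matrix α β ℂ) :
    trace (Mᴴ * M) = (sqF M : ℂ) := by
  unfold sqF
  push_cast
  rw [Finset.sum_comm]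
  simp only [trace, diag_apply, mul_apply, conjTranspose_apply]
  refine Finset.sum_congr rfl fun b _ => Finset.sum_congr rfl fun a _ => ?_
  exact RCLike.conj_mul (M a b)

lemma sqF_one (c : ℕ) : sqF (1 : Matrix (Fin c) (Fin c) ℂ) = c := by
  have h : ∀ a b : Fin c, ‖(1 : Matrix (Fin c) (Fin c) ℂ) a b‖ ^ 2
      = if a = b then (1 : ℝ) else 0 := by
    intro a b
    by_cases h : a = b <;> simp [Matrix.one_apply, h]
  simp only [sqF, h]
  simp [Finset.sum_ite_eq]

lemma sum_sqF_mul {I U V W : Type*} [Fintype I] [Fintype U] [Fintype V] [Fintype W]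
    [DecidableEq V]
    (A : I → Matrix U V ℂ) (hA : ∑ t, (A t)ᴴ * A t = 1) (C : Matrix V W ℂ) :
    ∑ t, sqF (A t * C) = sqF C := by
  have key : (∑ t, (sqF (A t * C) : ℂ)) = (sqF C : ℂ) := by
    calc ∑ t, (sqF (A t * C) : ℂ)
        = ∑ t, trace (Cᴴ * ((A t)ᴴ * A t) * C) := by
          refine Finset.sum_congr rfl fun t _ => ?_
          rw [← trace_conjTranspose_mul, Matrix.conjTranspose_mul]
          rw [Matrix.mul_assoc, ← Matrix.mul_assoc ((A t)ᴴ) (A t) C, ← Matrix.mul_assoc]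
      _ = trace (Cᴴ * (∑ t, (A t)ᴴ * A t) * C) := by
          rw [← Matrix.trace_sum]
          congr 1
          simp [Matrix.mul_sum, Matrix.sum_mul]
      _ = trace (Cᴴ * C) := by rw [hA, Matrix.mul_one]
      _ = (sqF C : ℂ) := trace_conjTranspose_mul C
  exact_mod_cast key

section split

variable {α β : Type*} [DecidableEq α]

/-- Insert value `x` at coordinate `k`. -/
def ins (k : α) (x : β) (g : {s : α // s ≠ k} → β) : α → β :=
  fun s => if h : s = k then x else g ⟨s, h⟩

@[simp] lemma ins_same (k : α) (x : β) (g : {s : α // s ≠ k} → β) : ins k x g k = x := by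
  simp [ins]

lemma ins_ne (k : α) (x : β) (g : {s : α // s ≠ k} → β) {s : α} (h : s ≠ k) :
    ins k x g s = g ⟨s, h⟩ := by
  simp [ins, h]

lemma sum_split_at [Fintype α] [Fintype β] {γ : Type*} [AddCommMonoid γ]
    (k : α) (f : (α → β) → γ) :
    ∑ i : α → β, f i = ∑ x : β, ∑ g : {s : α // s ≠ k} → β, f (ins k x g) := by
  rw [← Equiv.sum_comp (Equiv.funSplitAt k β).symm f, Fintype.sum_prod_type]
  refine Finset.sum_congr rfl fun x _ => Finset.sum_congr rfl fun g _ => ?_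
  congr 1
  funext s
  by_cases h : s = k
  · subst h; simp [ins, Equiv.funSplitAt, Equiv.piSplitAt]
  · simp [ins, h, Equiv.funSplitAt, Equiv.piSplitAt]

end split

/-- Spectral-type bound: multiplying by blocks on the left. -/
lemma sum_sqF_mul_le {U V W : Type*} [Fintype U] [Fintype V] [Fintype W] {dd : ℕ}
    (Δ : Fin dd → Fin dd → Matrix U V ℂ) (c : ℝ)
    (hv : ∀ v : V → ℂ,
      (∑ x : Fin dd, ∑ y : Fin dd, ∑ a : U, ‖(Δ x y).mulVec v a‖ ^ 2) ≤ c * ∑ b, ‖v b‖ ^ 2)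
    (C : Matrix V W ℂ) :
    ∑ x : Fin dd, ∑ y : Fin dd, sqF (Δ x y * C) ≤ c * sqF C := by
  have hrw : ∀ x y, sqF (Δ x y * C) = ∑ w, ∑ a, ‖(Δ x y).mulVec (fun b => C b w) a‖ ^ 2 := by
    intro x y
    rw [sqF, Finset.sum_comm]
    refine Finset.sum_congr rfl fun w _ => Finset.sum_congr rfl fun a _ => ?_
    simp [Matrix.mul_apply, Matrix.mulVec, dotProduct]
  calc ∑ x : Fin dd, ∑ y : Fin dd, sqF (Δ x y * C)
      = ∑ w, ∑ x : Fin dd, ∑ y : Fin dd, ∑ a, ‖(Δ x y).mulVec (fun b => C b w) a‖ ^ 2 := by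
        simp only [hrw]
        have h1 : ∀ x : Fin dd,
            (∑ y : Fin dd, ∑ w : W, ∑ a : U, ‖(Δ x y).mulVec (fun b => C b w) a‖ ^ 2)
              = ∑ w : W, ∑ y : Fin dd, ∑ a : U, ‖(Δ x y).mulVec (fun b => C b w) a‖ ^ 2 :=
          fun x => Finset.sum_comm
        simp only [h1]
        exact Finset.sum_comm
    _ ≤ ∑ w, c * ∑ b, ‖C b w‖ ^ 2 := Finset.sum_le_sum fun w _ => hv _
    _ = c * sqF C := by rw [← Finset.mul_sum, sqF, Finset.sum_comm]

/-- Cauchy–Schwarz: a Frobenius bound implies a spectral-type bound. -/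
lemma frob_spec {α β : Type*} [Fintype α] [Fintype β] (M : Matrix α β ℂ) (c : ℝ)
    (h : (∑ p, ∑ b, ‖M p b‖ ^ 2) ≤ c) (v : β → ℂ) :
    ∑ q, ‖M.mulVec v q‖ ^ 2 ≤ c * ∑ b, ‖v b‖ ^ 2 := by
  have hV : (0:ℝ) ≤ ∑ b, ‖v b‖ ^ 2 := Finset.sum_nonneg fun _ _ => by positivity
  calc ∑ q, ‖M.mulVec v q‖ ^ 2
      ≤ ∑ q, (∑ b, ‖M q b‖ ^ 2) * ∑ b, ‖v b‖ ^ 2 := by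
        refine Finset.sum_le_sum fun q _ => ?_
        have h1 : ‖M.mulVec v q‖ ≤ ∑ b, ‖M q b‖ * ‖v b‖ := by
          refine le_trans (norm_sum_le _ _) ?_
          exact le_of_eq (Finset.sum_congr rfl fun b _ => norm_mul _ _)
        calc ‖M.mulVec v q‖ ^ 2 ≤ (∑ b, ‖M q b‖ * ‖v b‖) ^ 2 := by
              have := norm_nonneg (M.mulVec v q)
              nlinarith [Finset.sum_nonneg (s := (Finset.univ : Finset β))
                (f := fun b => ‖M q b‖ * ‖v b‖) (fun b _ => by positivity)]
          _ ≤ (∑ b, ‖M q b‖ ^ 2) * ∑ b, ‖v b‖ ^ 2 :=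
              Finset.sum_mul_sq_le_sq_mul_sq _ _ _
    _ = (∑ q, ∑ b, ‖M q b‖ ^ 2) * ∑ b, ‖v b‖ ^ 2 := by rw [Finset.sum_mul]
    _ ≤ c * ∑ b, ‖v b‖ ^ 2 := mul_le_mul_of_nonneg_right h hV

section collapse

variable {N d : ℕ}

lemma sum_split_pair (k : Fin N) (F : (Fin N → Fin d) → (Fin N → Fin d) → ℝ) :
    (∑ i : Fin N → Fin d, ∑ j : Fin N → Fin d, F i j)
      = ∑ x : Fin d, ∑ g : {s : Fin N // s ≠ k} → Fin d,
          ∑ y : Fin d, ∑ h : {s : Fin N // s ≠ k} → Fin d, F (ins k x g) (ins k y h) := by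
  rw [sum_split_at k (f := fun i => ∑ j, F i j)]
  exact Finset.sum_congr rfl fun x _ => Finset.sum_congr rfl fun g _ =>
    sum_split_at k (f := fun j => F (ins k x g) j)

lemma sum_reorder4 {A G B H : Type*} [Fintype A] [Fintype G] [Fintype B] [Fintype H]
    (F : A → G → B → H → ℝ) :
    (∑ x : A, ∑ g : G, ∑ y : B, ∑ h : H, F x g y h)
      = ∑ g : G, ∑ h : H, ∑ x : A, ∑ y : B, F x g y h := by
  have h1 : ∀ (x : A) (g : G), (∑ y : B, ∑ h : H, F x g y h) = ∑ h : H, ∑ y : B, F x g y h :=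
    fun _ _ => Finset.sum_comm
  simp only [h1]
  trans (∑ g : G, ∑ x : A, ∑ h : H, ∑ y : B, F x g y h)
  · exact Finset.sum_comm
  · exact Finset.sum_congr rfl fun g _ => Finset.sum_comm

variable {U V W : Type*} [Fintype U] [Fintype V] [Fintype W]

lemma collapseK (hd : 0 < d) (k : Fin N)
    (D : Fin d → Fin d → Matrix U V ℂ)
    (C : (Fin N → Fin d) → (Fin N → Fin d) → Matrix V W ℂ)
    (hC : ∀ i j i' j', (∀ s : Fin N, s ≠ k → i s = i' s ∧ j s = j' s) → C i j = C i' j') :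
    (∑ i, ∑ j, sqF (D (i k) (j k) * C i j))
      = ∑ g : {s : Fin N // s ≠ k} → Fin d, ∑ h : {s : Fin N // s ≠ k} → Fin d,
          ∑ x : Fin d, ∑ y : Fin d,
            sqF (D x y * C (ins k ⟨0, hd⟩ g) (ins k ⟨0, hd⟩ h)) := by
  have hK : ∀ (x y : Fin d) g h, C (ins k x g) (ins k y h)
      = C (ins k ⟨0, hd⟩ g) (ins k ⟨0, hd⟩ h) := by
    intro x y g h
    refine hC _ _ _ _ fun s hs => ⟨?_, ?_⟩ <;> rw [ins_ne _ _ _ hs, ins_ne _ _ _ hs]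
  rw [sum_split_pair k]
  have hr : ∀ x g y h,
      sqF (D ((ins k x g) k) ((ins k y h) k) * C (ins k x g) (ins k y h))
        = sqF (D x y * C (ins k ⟨0, hd⟩ g) (ins k ⟨0, hd⟩ h)) := by
    intro x g y h; rw [ins_same, ins_same, hK]
  simp only [hr]
  exact sum_reorder4 _

lemma constK (hd : 0 < d) (k : Fin N)
    (C : (Fin N → Fin d) → (Fin N → Fin d) → Matrix V W ℂ)
    (hC : ∀ i j i' j', (∀ s : Fin N, s ≠ k → i s = i' s ∧ j s = j' s) → C i j = C i' j') :
    (∑ i, ∑ j, sqF (C i j))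
      = (d:ℝ)^2 * ∑ g : {s : Fin N // s ≠ k} → Fin d, ∑ h : {s : Fin N // s ≠ k} → Fin d,
          sqF (C (ins k ⟨0, hd⟩ g) (ins k ⟨0, hd⟩ h)) := by
  have hK : ∀ (x y : Fin d) g h, C (ins k x g) (ins k y h)
      = C (ins k ⟨0, hd⟩ g) (ins k ⟨0, hd⟩ h) := by
    intro x y g h
    refine hC _ _ _ _ fun s hs => ⟨?_, ?_⟩ <;> rw [ins_ne _ _ _ hs, ins_ne _ _ _ hs]
  rw [sum_split_pair k]
  have hr : ∀ (x : Fin d) g (y : Fin d) h, sqF (C (ins k x g) (ins k y h))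
      = sqF (C (ins k ⟨0, hd⟩ g) (ins k ⟨0, hd⟩ h)) := fun x g y h => by rw [hK]
  simp only [hr]
  have hy : ∀ g : {s : Fin N // s ≠ k} → Fin d,
      (∑ _y : Fin d, ∑ h : {s : Fin N // s ≠ k} → Fin d,
        sqF (C (ins k ⟨0, hd⟩ g) (ins k ⟨0, hd⟩ h)))
      = (d:ℝ) * ∑ h : {s : Fin N // s ≠ k} → Fin d,
          sqF (C (ins k ⟨0, hd⟩ g) (ins k ⟨0, hd⟩ h)) := by
    intro g; rw [Finset.sum_const, Finset.card_univ, Fintype.card_fin, nsmul_eq_mul]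
  simp only [hy]
  simp only [← Finset.mul_sum]
  rw [Finset.sum_const, Finset.card_univ, Fintype.card_fin, nsmul_eq_mul]
  ring

lemma site_collapse_eq [DecidableEq V] (hd : 0 < d) (k : Fin N)
    (D : Fin d → Fin d → Matrix U V ℂ)
    (hD : ∑ x : Fin d, ∑ y : Fin d, (D x y)ᴴ * D x y = 1)
    (C : (Fin N → Fin d) → (Fin N → Fin d) → Matrix V W ℂ)
    (hC : ∀ i j i' j', (∀ s : Fin N, s ≠ k → i s = i' s ∧ j s = j' s) → C i j = C i' j') :
    ((d:ℝ)^2) * (∑ i, ∑ j, sqF (D (i k) (j k) * C i j)) = ∑ i, ∑ j, sqF (C i j) := by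
  rw [collapseK hd k D C hC, constK hd k C hC]
  congr 1
  refine Finset.sum_congr rfl fun g _ => Finset.sum_congr rfl fun h _ => ?_
  have hg : ∑ p : Fin d × Fin d, (D p.1 p.2)ᴴ * D p.1 p.2 = 1 := by
    rw [Fintype.sum_prod_type]; exact hD
  have h2 := sum_sqF_mul (fun p : Fin d × Fin d => D p.1 p.2) hg
    (C (ins k ⟨0, hd⟩ g) (ins k ⟨0, hd⟩ h))
  rw [Fintype.sum_prod_type] at h2
  exact h2

lemma site_collapse_le (hd : 0 < d) (k : Fin N)
    (D : Fin d → Fin d → Matrix U V ℂ) (c : ℝ)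
    (hv : ∀ v : V → ℂ,
      (∑ x : Fin d, ∑ y : Fin d, ∑ a : U, ‖(D x y).mulVec v a‖ ^ 2) ≤ c * ∑ b, ‖v b‖ ^ 2)
    (C : (Fin N → Fin d) → (Fin N → Fin d) → Matrix V W ℂ)
    (hC : ∀ i j i' j', (∀ s : Fin N, s ≠ k → i s = i' s ∧ j s = j' s) → C i j = C i' j') :
    ((d:ℝ)^2) * (∑ i, ∑ j, sqF (D (i k) (j k) * C i j)) ≤ c * ∑ i, ∑ j, sqF (C i j) := by
  rw [collapseK hd k D C hC, constK hd k C hC]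
  have hstep : (∑ g : {s : Fin N // s ≠ k} → Fin d, ∑ h : {s : Fin N // s ≠ k} → Fin d,
      ∑ x : Fin d, ∑ y : Fin d, sqF (D x y * C (ins k ⟨0, hd⟩ g) (ins k ⟨0, hd⟩ h)))
      ≤ ∑ g : {s : Fin N // s ≠ k} → Fin d, ∑ h : {s : Fin N // s ≠ k} → Fin d,
          c * sqF (C (ins k ⟨0, hd⟩ g) (ins k ⟨0, hd⟩ h)) := by
    refine Finset.sum_le_sum fun g _ => Finset.sum_le_sum fun h _ => ?_
    exact sum_sqF_mul_le D c hv _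
  calc ((d:ℝ)^2) * _ ≤ ((d:ℝ)^2) * ∑ g, ∑ h, c * sqF (C (ins k ⟨0, hd⟩ g) (ins k ⟨0, hd⟩ h)) :=
        mul_le_mul_of_nonneg_left hstep (by positivity)
    _ = c * ((d:ℝ)^2 * ∑ g, ∑ h, sqF (C (ins k ⟨0, hd⟩ g) (ins k ⟨0, hd⟩ h))) := by
        simp only [← Finset.mul_sum]; ring

end collapse

section chain

variable {N d : ℕ}

lemma prefix_collapse {W : Type*} [Fintype W] (r : Fin (N + 1) → ℕ)
    (A : ∀ i : Fin N, Fin d → Fin d → Matrix (Fin (r i.castSucc)) (Fin (r i.succ)) ℂ)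
    (hd : 0 < d) (k : Fin (N + 1)) :
    (∀ s : Fin N, s.val < k.val → ∑ x : Fin d, ∑ y : Fin d, (A s x y)ᴴ * A s x y = 1) →
    ∀ (C : (Fin N → Fin d) → (Fin N → Fin d) → Matrix (Fin (r k)) W ℂ),
    (∀ i j i' j', (∀ s : Fin N, k.val ≤ s.val → i s = i' s ∧ j s = j' s) → C i j = C i' j') →
    ((d:ℝ) ^ (2 * k.val)) *
        (∑ i, ∑ j, sqF (leftProd r (fun s => A s (i s) (j s)) k * C i j))
      = ∑ i, ∑ j, sqF (C i j) := by
  induction k using Fin.induction with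
  | zero =>
      intro _ C _
      simp only [leftProd_zero, Matrix.one_mul, Fin.val_zero, Nat.mul_zero, pow_zero, one_mul]
  | succ k ih =>
      intro hA C hC
      have h1 : ∀ i j : Fin N → Fin d,
          sqF (leftProd r (fun s => A s (i s) (j s)) k.succ * C i j)
            = sqF (leftProd r (fun s => A s (i s) (j s)) k.castSucc
                * (A k (i k) (j k) * C i j)) := by
        intro i j; rw [leftProd_succ, Matrix.mul_assoc]
      have hC' : ∀ i j i' j', (∀ s : Fin N, k.castSucc.val ≤ s.val → i s = i' s ∧ j s = j' s) →
          A k (i k) (j k) * C i j = A k (i' k) (j' k) * C i' j' := by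
        intro i j i' j' hagree
        have hk := hagree k (by rw [Fin.coe_castSucc])
        rw [hk.1, hk.2, hC i j i' j' (fun s hs => hagree s
          (by rw [Fin.coe_castSucc]; rw [Fin.val_succ] at hs; omega))]
      have hA' : ∀ s : Fin N, s.val < k.castSucc.val →
          ∑ x : Fin d, ∑ y : Fin d, (A s x y)ᴴ * A s x y = 1 := by
        intro s hs
        exact hA s (by rw [Fin.val_succ]; rw [Fin.coe_castSucc] at hs; omega)
      have hih := ih hA' (fun i j => A k (i k) (j k) * C i j) hC'
      have hsc := site_collapse_eq hd k (A k)
        (hA k (by rw [Fin.val_succ]; omega)) C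
        (fun i j i' j' hagree => hC i j i' j' (fun s hs => hagree s
          (by intro hcon; subst hcon; rw [Fin.val_succ] at hs; omega)))
      simp only [h1]
      calc ((d:ℝ) ^ (2 * k.succ.val)) * (∑ i, ∑ j,
              sqF (leftProd r (fun s => A s (i s) (j s)) k.castSucc
                * (A k (i k) (j k) * C i j)))
          = ((d:ℝ)^2) * (((d:ℝ) ^ (2 * k.castSucc.val)) * (∑ i, ∑ j,
              sqF (leftProd r (fun s => A s (i s) (j s)) k.castSucc
                * (A k (i k) (j k) * C i j)))) := by
            rw [← mul_assoc, ← pow_add]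
            congr 2
            rw [Fin.val_succ, Fin.coe_castSucc]
            ring
        _ = ((d:ℝ)^2) * (∑ i, ∑ j, sqF (A k (i k) (j k) * C i j)) := by rw [hih]
        _ = ∑ i, ∑ j, sqF (C i j) := hsc

lemma suffix_sqF (r : Fin (N + 1) → ℕ)
    (A : ∀ i : Fin N, Fin d → Fin d → Matrix (Fin (r i.castSucc)) (Fin (r i.succ)) ℂ)
    (hd : 0 < d) (k : Fin (N + 1)) :
    (∀ s : Fin N, k.val ≤ s.val → ∑ x : Fin d, ∑ y : Fin d, (A s x y)ᴴ * A s x y = 1) →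
    (∑ i : Fin N → Fin d, ∑ j : Fin N → Fin d,
        sqF (rightProd r (fun s => A s (i s) (j s)) k))
      = (d:ℝ) ^ (2 * k.val) * (r (Fin.last N) : ℝ) := by
  induction k using Fin.reverseInduction with
  | last =>
      intro _
      have h1 : ∀ i j : Fin N → Fin d,
          sqF (rightProd r (fun s => A s (i s) (j s)) (Fin.last N))
            = (r (Fin.last N) : ℝ) := by
        intro i j; rw [rightProd_last, sqF_one]
      simp only [h1, Finset.sum_const, Finset.card_univ, Fintype.card_fun, Fintype.card_fin,
        nsmul_eq_mul, Fin.val_last]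
      push_cast
      ring
  | cast k ih =>
      intro hA
      have hih := ih (fun s hs => hA s (by rw [Fin.coe_castSucc]; rw [Fin.val_succ] at hs; omega))
      have h1 : ∀ i j : Fin N → Fin d,
          sqF (rightProd r (fun s => A s (i s) (j s)) k.castSucc)
            = sqF (A k (i k) (j k) * rightProd r (fun s => A s (i s) (j s)) k.succ) := by
        intro i j; rw [rightProd_castSucc]
      have hC : ∀ (i j i' j' : Fin N → Fin d),
          (∀ s : Fin N, s ≠ k → i s = i' s ∧ j s = j' s) →
          rightProd r (fun s => A s (i s) (j s)) k.succ
            = rightProd r (fun s => A s (i' s) (j' s)) k.succ := by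
        intro i j i' j' hagree
        refine rightProd_congr r _ _ k.succ fun s hs => ?_
        have hsk : s ≠ k := by
          intro hcon; subst hcon; rw [Fin.val_succ] at hs; omega
        rw [(hagree s hsk).1, (hagree s hsk).2]
      have hsc := site_collapse_eq hd k (A k) (hA k (by rw [Fin.coe_castSucc])) 
        (fun i j => rightProd r (fun s => A s (i s) (j s)) k.succ) hC
      rw [hih] at hsc
      simp only [h1]
      have hd2 : ((d:ℝ)^2) ≠ 0 := by positivity
      apply mul_left_cancel₀ hd2
      rw [hsc]
      rw [← mul_assoc, ← pow_add]
      congr 2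
      rw [Fin.coe_castSucc, Fin.val_succ]
      ring

end chain

section tele

variable {n d : ℕ}

lemma telescope_entry (r : Fin (n + 2) → ℕ)
    (X Xb : ∀ ℓ : Fin (n + 1), Fin d → Fin d →
      Matrix (Fin (r ℓ.castSucc)) (Fin (r ℓ.succ)) ℂ)
    (i j : Fin (n + 1) → Fin d) :
    mpoEntry r X i j - mpoEntry r Xb i j =
      ∑ ℓ : Fin (n + 1),
        leftProd r (fun s => X s (i s) (j s)) ℓ.castSucc *
          ((X ℓ (i ℓ) (j ℓ) - Xb ℓ (i ℓ) (j ℓ)) *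
            rightProd r (fun s => Xb s (i s) (j s)) ℓ.succ) := by
  have hF := fin_telescope (fun k : Fin (n + 2) =>
    leftProd r (fun s => X s (i s) (j s)) k * rightProd r (fun s => Xb s (i s) (j s)) k)
  have hlast : leftProd r (fun s => X s (i s) (j s)) (Fin.last (n + 1)) *
      rightProd r (fun s => Xb s (i s) (j s)) (Fin.last (n + 1)) = mpoEntry r X i j := by
    rw [rightProd_last, Matrix.mul_one]; rfl
  have h0 : leftProd r (fun s => X s (i s) (j s)) 0 *
      rightProd r (fun s => Xb s (i s) (j s)) 0 = mpoEntry r Xb i j := by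
    rw [leftProd_zero, Matrix.one_mul]
    have := leftProd_mul_rightProd r (fun s => Xb s (i s) (j s)) 0
    rw [leftProd_zero, Matrix.one_mul] at this
    rw [← this]; rfl
  rw [hlast, h0] at hF
  rw [← hF]
  refine Finset.sum_congr rfl fun ℓ _ => ?_
  rw [leftProd_succ, rightProd_castSucc, Matrix.mul_assoc, ← Matrix.mul_sub, ← Matrix.sub_mul]

lemma norm_sum_sq {m : ℕ} (s : Fin m → ℂ) :
    ‖∑ ℓ, s ℓ‖ ^ 2 ≤ (m : ℝ) * ∑ ℓ, ‖s ℓ‖ ^ 2 := by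
  have h1 : ‖∑ ℓ, s ℓ‖ ≤ ∑ ℓ, ‖s ℓ‖ := norm_sum_le _ _
  have h2 : ‖∑ ℓ, s ℓ‖ ^ 2 ≤ (∑ ℓ, ‖s ℓ‖) ^ 2 := by
    have := norm_nonneg (∑ ℓ, s ℓ)
    nlinarith [Finset.sum_nonneg (s := (Finset.univ : Finset (Fin m)))
      (f := fun ℓ => ‖s ℓ‖) (fun ℓ _ => norm_nonneg _)]
  refine h2.trans ?_
  have h3 : (∑ ℓ, (1:ℝ) * ‖s ℓ‖) ^ 2 ≤ (∑ ℓ : Fin m, (1:ℝ)^2) * ∑ ℓ, ‖s ℓ‖ ^ 2 :=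
    Finset.sum_mul_sq_le_sq_mul_sq _ _ _
  simp only [one_mul, one_pow, Finset.sum_const, Finset.card_univ, Fintype.card_fin,
    nsmul_eq_mul, mul_one] at h3
  exact h3

end tele

end MpoPerturb

open MpoPerturb in
/-- if `ρ` and `ρ̄` are MPOs with the same bond dimensions whose
factors are in left-canonical form (for `ρ̄` at all sites except the last, for
`ρ` at every site, as in the set of unit-norm canonical MPOs), and the left
unfoldings satisfy `‖L(X_ℓ) − L(X̄_ℓ)‖ ≤ ε_ℓ` in spectral norm (Frobenius norm at
the last site), then `‖ρ − ρ̄‖_F² ≤ n · Σ_ℓ r_ℓ ε_ℓ²`. -/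
theorem mpo_perturbation_bound {n d : ℕ} (r : Fin (n + 2) → ℕ)
    (hr0 : r 0 = 1) (hrlast : r (Fin.last (n + 1)) = 1)
    (X Xb : ∀ ℓ : Fin (n + 1), Fin d → Fin d →
      Matrix (Fin (r ℓ.castSucc)) (Fin (r ℓ.succ)) ℂ)
    (hXcanon : ∀ ℓ : Fin (n + 1),
      ∑ i : Fin d, ∑ j : Fin d, (X ℓ i j)ᴴ * X ℓ i j = 1)
    (hXbcanon : ∀ ℓ : Fin (n + 1), ℓ ≠ Fin.last (n + 1) →
      ∑ i : Fin d, ∑ j : Fin d, (Xb ℓ i j)ᴴ * Xb ℓ i j = 1)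
    (ε : Fin (n + 1) → ℝ)
    (hspec : ∀ ℓ : Fin (n + 1), ℓ ≠ Fin.last (n + 1) →
      ∀ v : Fin (r ℓ.succ) → ℂ,
        (∑ q, ‖(leftUnfold (X ℓ) - leftUnfold (Xb ℓ)).mulVec v q‖ ^ 2) ≤
          (ε ℓ) ^ 2 * ∑ b, ‖v b‖ ^ 2)
    (hfrob : ∑ p, ∑ b,
        ‖(leftUnfold (X (Fin.last (n + 1))) - leftUnfold (Xb (Fin.last (n + 1)))) p b‖ ^ 2
        ≤ (ε (Fin.last (n + 1))) ^ 2)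
    (ρ ρb : Matrix (Fin (n + 1) → Fin d) (Fin (n + 1) → Fin d) ℂ)
    (hρ : ∀ i j, ρ i j = ∑ a, ∑ b, mpoEntry r X i j a b)
    (hρb : ∀ i j, ρb i j = ∑ a, ∑ b, mpoEntry r Xb i j a b) :
    (∑ i, ∑ j, ‖ρ i j - ρb i j‖ ^ 2) ≤
      (n + 1 : ℝ) * ∑ ℓ : Fin (n + 1), (r ℓ.succ : ℝ) * (ε ℓ) ^ 2 := by
  classical
  -- the doubly-coerced `Fin.last (n+1)` appearing in the hypotheses is `0 : Fin (n+1)`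
  have hz : ((((Fin.last (n + 1) : Fin (n + 2)) : ℕ)) : Fin (n + 1)) = 0 := by
    rw [Fin.val_last]; exact Fin.natCast_self (n + 1)
  rw [hz] at hfrob
  simp only [hz] at hspec hXbcanon
  -- positivity of the bond dimensions
  have rpos : ∀ k : Fin (n + 2), 0 < r k := by
    intro k
    induction k using Fin.reverseInduction with
    | last => rw [hrlast]; exact one_pos
    | cast k ih =>
        by_contra hcon
        push_neg at hcon
        have hre : r k.castSucc = 0 := Nat.le_zero.mp hcon
        have a : Fin (r k.succ) := ⟨0, ih⟩
        have h1 : (∑ x : Fin d, ∑ y : Fin d, (X k x y)ᴴ * X k x y) a a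
            = (1 : Matrix (Fin (r k.succ)) (Fin (r k.succ)) ℂ) a a := by rw [hXcanon k]
        haveI : IsEmpty (Fin (r k.castSucc)) := by rw [hre]; infer_instance
        rw [Matrix.one_apply_eq] at h1
        simp [Matrix.sum_apply, Matrix.mul_apply] at h1
  -- trivial case `d = 0`
  rcases Nat.eq_zero_or_pos d with hd0 | hd
  · subst hd0
    haveI : IsEmpty (Fin (n + 1) → Fin 0) := ⟨fun f => (f 0).elim0⟩
    rw [Finset.univ_eq_empty]
    simp only [Finset.sum_empty]
    exact mul_nonneg (by positivity)
      (Finset.sum_nonneg fun ℓ _ => by positivity)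
  -- boundary bond dimensions are 1
  haveI hU0 : Unique (Fin (r 0)) := by rw [hr0]; infer_instance
  haveI hUl : Unique (Fin (r (Fin.last (n + 1)))) := by rw [hrlast]; infer_instance
  -- uniform spectral bound in triple-sum form
  have hv : ∀ ℓ : Fin (n + 1), ∀ v : Fin (r ℓ.succ) → ℂ,
      (∑ x : Fin d, ∑ y : Fin d, ∑ a : Fin (r ℓ.castSucc),
        ‖(X ℓ x y - Xb ℓ x y).mulVec v a‖ ^ 2) ≤ (ε ℓ) ^ 2 * ∑ b, ‖v b‖ ^ 2 := by
    intro ℓ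
    have base : ∀ v : Fin (r ℓ.succ) → ℂ,
        (∑ q, ‖(leftUnfold (X ℓ) - leftUnfold (Xb ℓ)).mulVec v q‖ ^ 2)
          ≤ (ε ℓ) ^ 2 * ∑ b, ‖v b‖ ^ 2 := by
      by_cases hℓ : ℓ = 0
      · subst hℓ; exact fun v => frob_spec _ _ hfrob v
      · exact hspec ℓ hℓ
    intro v
    have hb := base v
    simp only [Fintype.sum_prod_type] at hb
    have hm : ∀ (x y : Fin d) (a : Fin (r ℓ.castSucc)),
        (leftUnfold (X ℓ) - leftUnfold (Xb ℓ)).mulVec v (x, y, a)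
          = (X ℓ x y - Xb ℓ x y).mulVec v a := by
      intro x y a
      simp [leftUnfold, Matrix.mulVec, dotProduct, Matrix.sub_apply]
    simp only [hm] at hb
    exact hb
  -- Xb canonical at positive sites
  have hXb' : ∀ s : Fin (n + 1), 0 < s.val →
      ∑ x : Fin d, ∑ y : Fin d, (Xb s x y)ᴴ * Xb s x y = 1 := by
    intro s hs
    refine hXbcanon s fun hcon => ?_
    rw [hcon] at hs
    simp at hs
  -- per-site bound
  have Tbound : ∀ ℓ : Fin (n + 1),
      (∑ i : Fin (n + 1) → Fin d, ∑ j : Fin (n + 1) → Fin d,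
        sqF (leftProd r (fun s => X s (i s) (j s)) ℓ.castSucc *
          ((X ℓ (i ℓ) (j ℓ) - Xb ℓ (i ℓ) (j ℓ)) *
            rightProd r (fun s => Xb s (i s) (j s)) ℓ.succ)))
        ≤ (ε ℓ) ^ 2 := by
    intro ℓ
    have hCpre : ∀ i j i' j' : Fin (n + 1) → Fin d,
        (∀ s : Fin (n + 1), ℓ.castSucc.val ≤ s.val → i s = i' s ∧ j s = j' s) →
        (X ℓ (i ℓ) (j ℓ) - Xb ℓ (i ℓ) (j ℓ)) *
            rightProd r (fun s => Xb s (i s) (j s)) ℓ.succ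
          = (X ℓ (i' ℓ) (j' ℓ) - Xb ℓ (i' ℓ) (j' ℓ)) *
              rightProd r (fun s => Xb s (i' s) (j' s)) ℓ.succ := by
      intro i j i' j' hagree
      have hℓeq := hagree ℓ (by rw [Fin.coe_castSucc])
      rw [hℓeq.1, hℓeq.2,
        rightProd_congr r _ _ ℓ.succ (fun s hs => by
          have := hagree s (by rw [Fin.coe_castSucc]; rw [Fin.val_succ] at hs; omega)
          rw [this.1, this.2])]
    have hpc := prefix_collapse r X hd ℓ.castSucc (fun s _ => hXcanon s)
      (fun i j => (X ℓ (i ℓ) (j ℓ) - Xb ℓ (i ℓ) (j ℓ)) *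
        rightProd r (fun s => Xb s (i s) (j s)) ℓ.succ) hCpre
    have hCmid : ∀ i j i' j' : Fin (n + 1) → Fin d,
        (∀ s : Fin (n + 1), s ≠ ℓ → i s = i' s ∧ j s = j' s) →
        rightProd r (fun s => Xb s (i s) (j s)) ℓ.succ
          = rightProd r (fun s => Xb s (i' s) (j' s)) ℓ.succ := by
      intro i j i' j' hagree
      refine rightProd_congr r _ _ ℓ.succ fun s hs => ?_
      have hsk : s ≠ ℓ := by
        intro hcon; subst hcon; rw [Fin.val_succ] at hs; omega
      rw [(hagree s hsk).1, (hagree s hsk).2]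
    have hsc := site_collapse_le hd ℓ (fun x y => X ℓ x y - Xb ℓ x y) ((ε ℓ) ^ 2) (hv ℓ)
      (fun i j => rightProd r (fun s => Xb s (i s) (j s)) ℓ.succ) hCmid
    have hsf := suffix_sqF r Xb hd ℓ.succ
      (fun s hs => hXb' s (by rw [Fin.val_succ] at hs; omega))
    have hP : (0:ℝ) < (d:ℝ) ^ (2 * ℓ.val) * (d:ℝ) ^ 2 := by positivity
    refine le_of_mul_le_mul_left ?_ hP
    calc (d:ℝ) ^ (2 * ℓ.val) * (d:ℝ) ^ 2 *
          (∑ i : Fin (n + 1) → Fin d, ∑ j : Fin (n + 1) → Fin d,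
            sqF (leftProd r (fun s => X s (i s) (j s)) ℓ.castSucc *
              ((X ℓ (i ℓ) (j ℓ) - Xb ℓ (i ℓ) (j ℓ)) *
                rightProd r (fun s => Xb s (i s) (j s)) ℓ.succ)))
        = (d:ℝ) ^ 2 * ((d:ℝ) ^ (2 * ℓ.castSucc.val) *
            (∑ i : Fin (n + 1) → Fin d, ∑ j : Fin (n + 1) → Fin d,
              sqF (leftProd r (fun s => X s (i s) (j s)) ℓ.castSucc *
                ((X ℓ (i ℓ) (j ℓ) - Xb ℓ (i ℓ) (j ℓ)) *
                  rightProd r (fun s => Xb s (i s) (j s)) ℓ.succ)))) := by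
          rw [Fin.coe_castSucc]; ring
      _ = (d:ℝ) ^ 2 * (∑ i : Fin (n + 1) → Fin d, ∑ j : Fin (n + 1) → Fin d,
            sqF ((X ℓ (i ℓ) (j ℓ) - Xb ℓ (i ℓ) (j ℓ)) *
              rightProd r (fun s => Xb s (i s) (j s)) ℓ.succ)) := by rw [hpc]
      _ ≤ (ε ℓ) ^ 2 * (∑ i : Fin (n + 1) → Fin d, ∑ j : Fin (n + 1) → Fin d,
            sqF (rightProd r (fun s => Xb s (i s) (j s)) ℓ.succ)) := hsc
      _ = (d:ℝ) ^ (2 * ℓ.val) * (d:ℝ) ^ 2 * (ε ℓ) ^ 2 := by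
          have hc1 : ((r (Fin.last (n + 1)) : ℕ) : ℝ) = 1 := by rw [hrlast]; norm_num
          rw [hsf, hc1, Fin.val_succ]
          ring
  -- entrywise telescoping
  have hentry : ∀ i j : Fin (n + 1) → Fin d, ρ i j - ρb i j
      = ∑ ℓ : Fin (n + 1), ∑ a, ∑ b,
          (leftProd r (fun s => X s (i s) (j s)) ℓ.castSucc *
            ((X ℓ (i ℓ) (j ℓ) - Xb ℓ (i ℓ) (j ℓ)) *
              rightProd r (fun s => Xb s (i s) (j s)) ℓ.succ)) a b := by
    intro i j
    rw [hρ, hρb, ← Finset.sum_sub_distrib]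
    have h1 : ∀ a, ((∑ b, mpoEntry r X i j a b) - ∑ b, mpoEntry r Xb i j a b)
        = ∑ b, (mpoEntry r X i j - mpoEntry r Xb i j) a b := by
      intro a
      rw [← Finset.sum_sub_distrib]
      exact Finset.sum_congr rfl fun b _ => by rw [Matrix.sub_apply]
    simp only [h1]
    simp only [telescope_entry r X Xb i j, Matrix.sum_apply]
    have h2 : ∀ a : Fin (r 0), (∑ b : Fin (r (Fin.last (n + 1))), ∑ ℓ : Fin (n + 1),
        (leftProd r (fun s => X s (i s) (j s)) ℓ.castSucc *
          ((X ℓ (i ℓ) (j ℓ) - Xb ℓ (i ℓ) (j ℓ)) *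
            rightProd r (fun s => Xb s (i s) (j s)) ℓ.succ)) a b)
        = ∑ ℓ : Fin (n + 1), ∑ b : Fin (r (Fin.last (n + 1))),
            (leftProd r (fun s => X s (i s) (j s)) ℓ.castSucc *
              ((X ℓ (i ℓ) (j ℓ) - Xb ℓ (i ℓ) (j ℓ)) *
                rightProd r (fun s => Xb s (i s) (j s)) ℓ.succ)) a b :=
      fun a => Finset.sum_comm
    simp only [h2]
    exact Finset.sum_comm
  -- squared modulus of the 1×1 entry sum is the squared Frobenius norm
  have hsq : ∀ (α β : Type) (_ : Fintype α) (_ : Fintype β) (_ : Unique α) (_ : Unique β)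
      (M : Matrix α β ℂ), ‖∑ a, ∑ b, M a b‖ ^ 2 = sqF M := by
    intro α β _ _ _ _ M
    rw [Fintype.sum_unique, Fintype.sum_unique]
    rw [sqF, Fintype.sum_unique, Fintype.sum_unique]
  -- assemble
  calc ∑ i : Fin (n + 1) → Fin d, ∑ j : Fin (n + 1) → Fin d, ‖ρ i j - ρb i j‖ ^ 2
      ≤ ∑ i : Fin (n + 1) → Fin d, ∑ j : Fin (n + 1) → Fin d,
          ((n + 1 : ℝ) * ∑ ℓ : Fin (n + 1),
            sqF (leftProd r (fun s => X s (i s) (j s)) ℓ.castSucc *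
              ((X ℓ (i ℓ) (j ℓ) - Xb ℓ (i ℓ) (j ℓ)) *
                rightProd r (fun s => Xb s (i s) (j s)) ℓ.succ))) := by
        refine Finset.sum_le_sum fun i _ => Finset.sum_le_sum fun j _ => ?_
        rw [hentry i j]
        refine (norm_sum_sq _).trans (le_of_eq ?_)
        push_cast
        congr 1
        refine Finset.sum_congr rfl fun ℓ _ => ?_
        exact hsq _ _ _ _ hU0 hUl _
    _ = (n + 1 : ℝ) * ∑ ℓ : Fin (n + 1), ∑ i : Fin (n + 1) → Fin d,
          ∑ j : Fin (n + 1) → Fin d,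
            sqF (leftProd r (fun s => X s (i s) (j s)) ℓ.castSucc *
              ((X ℓ (i ℓ) (j ℓ) - Xb ℓ (i ℓ) (j ℓ)) *
                rightProd r (fun s => Xb s (i s) (j s)) ℓ.succ)) := by
        simp only [← Finset.mul_sum]
        congr 1
        have h3 : ∀ i : Fin (n + 1) → Fin d, (∑ j : Fin (n + 1) → Fin d, ∑ ℓ : Fin (n + 1),
            sqF (leftProd r (fun s => X s (i s) (j s)) ℓ.castSucc *
              ((X ℓ (i ℓ) (j ℓ) - Xb ℓ (i ℓ) (j ℓ)) *
                rightProd r (fun s => Xb s (i s) (j s)) ℓ.succ)))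
            = ∑ ℓ : Fin (n + 1), ∑ j : Fin (n + 1) → Fin d,
                sqF (leftProd r (fun s => X s (i s) (j s)) ℓ.castSucc *
                  ((X ℓ (i ℓ) (j ℓ) - Xb ℓ (i ℓ) (j ℓ)) *
                    rightProd r (fun s => Xb s (i s) (j s)) ℓ.succ)) :=
          fun i => Finset.sum_comm
        simp only [h3]
        exact Finset.sum_comm
    _ ≤ (n + 1 : ℝ) * ∑ ℓ : Fin (n + 1), (ε ℓ) ^ 2 := by
        refine mul_le_mul_of_nonneg_left (Finset.sum_le_sum fun ℓ _ => Tbound ℓ)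
          (by positivity)
    _ ≤ (n + 1 : ℝ) * ∑ ℓ : Fin (n + 1), (r ℓ.succ : ℝ) * (ε ℓ) ^ 2 := by
        refine mul_le_mul_of_nonneg_left (Finset.sum_le_sum fun ℓ _ => ?_) (by positivity)
        have h1 : (1 : ℝ) ≤ (r ℓ.succ : ℝ) := by exact_mod_cast rpos ℓ.succ
        nlinarith [sq_nonneg (ε ℓ)]
end

section
/- Suppose (f_{i,1},...,f_{i,K}), i = 1,...,Q are mutually independent random vectors, where each follows the multinomial distribution Multinomial(M, p_i) with probability vector p_i = (p_{i,1},...,p_{i,K}). Let a_{i,k} ≥ 0 be fixed nonnegative constants. Then for every t > 0, P(Σ_{i,k} a_{i,k}(f_{i,k}/M − p_{i,k}) > t) ≤ exp(−(Mt/(2a_max)) · min{1, a_max t / (2 Σ_{i,k} a_{i,k}² p_{i,k})}), where a_max = max_{i,k} a_{i,k}. -/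
set_option maxHeartbeats 1000000


open MeasureTheory

/-- The categorical distribution on `Fin K` with probabilities `p`. -/
noncomputable def catMeasure {K : ℕ} (p : Fin K → ℝ) : Measure (Fin K) :=
  ∑ k, ENNReal.ofReal (p k) • Measure.dirac k

/-- The law of `Q` mutually independent blocks of `M` i.i.d. categorical trials;
block `i` has category probabilities `p i`.  The associated counts are the `Q`
independent `Multinomial(M, p i)` random vectors. -/
noncomputable def multinomialFamily {Q K M : ℕ} (p : Fin Q → Fin K → ℝ) :
    Measure (Fin Q → Fin M → Fin K) :=
  Measure.pi fun i => Measure.pi fun _ : Fin M => catMeasure (p i)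

/-- The multinomial count `f_{i,k}`: the number of the `M` trials of block `i`
whose outcome is `k`. -/
def mcount {Q K M : ℕ} (ω : Fin Q → Fin M → Fin K) (i : Fin Q) (k : Fin K) : ℕ :=
  (Finset.univ.filter fun m => ω i m = k).card

lemma catMeasure_singleton {K : ℕ} (q : Fin K → ℝ) (k : Fin K) :
    catMeasure q {k} = ENNReal.ofReal (q k) := by
  simp [catMeasure, Measure.coe_finset_sum, Finset.sum_apply, Measure.dirac_apply',
    Set.indicator_apply]

instance {K : ℕ} (q : Fin K → ℝ) : IsFiniteMeasure (catMeasure q) := by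
  constructor
  simp only [catMeasure, Measure.coe_finset_sum, Finset.sum_apply, Measure.smul_apply,
    Measure.dirac_apply, smul_eq_mul]
  exact ENNReal.sum_lt_top.2 fun _ _ => by simp [ENNReal.mul_lt_top, ENNReal.ofReal_lt_top]

lemma pi_cat_singleton {K M : ℕ} (q : Fin K → ℝ) (y : Fin M → Fin K) :
    (Measure.pi fun _ : Fin M => catMeasure q) {y} = ∏ m, ENNReal.ofReal (q (y m)) := by
  rw [← Set.univ_pi_singleton y, Measure.pi_pi]
  simp [catMeasure_singleton]

open scoped Classical in
lemma multinomialFamily_apply {Q K M : ℕ} (p : Fin Q → Fin K → ℝ)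
    (s : Set (Fin Q → Fin M → Fin K)) :
    multinomialFamily (M := M) p s
      = ∑ x ∈ Finset.univ.filter (· ∈ s), ∏ i, ∏ m, ENNReal.ofReal (p i (x i m)) := by
  have hsing : ∀ x : Fin Q → Fin M → Fin K,
      multinomialFamily (M := M) p {x} = ∏ i, ∏ m, ENNReal.ofReal (p i (x i m)) := by
    intro x
    rw [multinomialFamily, ← Set.univ_pi_singleton x, Measure.pi_pi]
    exact Finset.prod_congr rfl fun i _ => pi_cat_singleton _ _
  have hs : s = ⋃ x ∈ Finset.univ.filter (· ∈ s), ({x} : Set _) := by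
    ext y; simp
  conv_lhs => rw [hs]
  rw [measure_biUnion_finset ?_ fun x _ => measurableSet_singleton x]
  · exact Finset.sum_congr rfl fun x _ => hsing x
  · intro x _ y hy hxy
    simp only [Set.disjoint_singleton]
    exact hxy

lemma exp_quad' {x : ℝ} (h0 : 0 ≤ x) (h1 : x ≤ 1) : Real.exp x ≤ 1 + x + x ^ 2 := by
  have hb := Real.exp_bound (n := 2) (by rw [abs_of_nonneg h0]; exact h1) (by norm_num)
  have h2 : |Real.exp x - (1 + x)| ≤ x ^ 2 * (3 / 4) := by
    have hsum : ∑ m ∈ Finset.range 2, x ^ m / (m.factorial : ℝ) = 1 + x := by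
      simp [Finset.sum_range_succ]
    rw [hsum, abs_of_nonneg h0] at hb
    convert hb using 2
    norm_num
  nlinarith [abs_le.1 h2, sq_nonneg x]

lemma factor_bound {K : ℕ} (q b : Fin (K + 1) → ℝ) (hq0 : ∀ k, 0 ≤ q k)
    (hq1 : ∑ k, q k = 1) (hb : ∀ k, 0 ≤ b k) (l : ℝ) (hl : 0 ≤ l)
    (hlb : ∀ k, l * b k ≤ 1) :
    Real.exp (-(l * ∑ k, b k * q k)) * ∑ k, q k * Real.exp (l * b k)
      ≤ Real.exp (l ^ 2 * ∑ k, b k ^ 2 * q k) := by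
  set μ := ∑ k, b k * q k with hμdef
  set s := ∑ k, b k ^ 2 * q k with hsdef
  have hμ : 0 ≤ μ := Finset.sum_nonneg fun k _ => mul_nonneg (hb k) (hq0 k)
  have hs : 0 ≤ s := Finset.sum_nonneg fun k _ => mul_nonneg (sq_nonneg _) (hq0 k)
  have h1 : ∑ k, q k * Real.exp (l * b k) ≤ 1 + l * μ + l ^ 2 * s := by
    calc ∑ k, q k * Real.exp (l * b k)
        ≤ ∑ k, q k * (1 + l * b k + (l * b k) ^ 2) :=
          Finset.sum_le_sum fun k _ =>
            mul_le_mul_of_nonneg_left (exp_quad' (mul_nonneg hl (hb k)) (hlb k)) (hq0 k)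
      _ = (∑ k, q k) + l * ∑ k, b k * q k + l ^ 2 * ∑ k, b k ^ 2 * q k := by
          rw [Finset.mul_sum, Finset.mul_sum, ← Finset.sum_add_distrib, ← Finset.sum_add_distrib]
          exact Finset.sum_congr rfl fun k _ => by ring
      _ = 1 + l * μ + l ^ 2 * s := by rw [hq1]
  have h2 : 1 + l * μ + l ^ 2 * s ≤ Real.exp (l * μ) * Real.exp (l ^ 2 * s) := by
    have e1 : 1 + l * μ ≤ Real.exp (l * μ) := by linarith [Real.add_one_le_exp (l * μ)]
    have e2 : 1 + l ^ 2 * s ≤ Real.exp (l ^ 2 * s) := by linarith [Real.add_one_le_exp (l ^ 2 * s)]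
    calc 1 + l * μ + l ^ 2 * s ≤ (1 + l * μ) * (1 + l ^ 2 * s) := by
          nlinarith [mul_nonneg hl hμ, mul_nonneg (sq_nonneg l) hs]
      _ ≤ Real.exp (l * μ) * Real.exp (l ^ 2 * s) :=
          mul_le_mul e1 e2 (by positivity) (Real.exp_nonneg _)
  calc Real.exp (-(l * μ)) * ∑ k, q k * Real.exp (l * b k)
      ≤ Real.exp (-(l * μ)) * (Real.exp (l * μ) * Real.exp (l ^ 2 * s)) :=
        mul_le_mul_of_nonneg_left (h1.trans h2) (Real.exp_nonneg _)
    _ = Real.exp (l ^ 2 * s) := by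
        rw [← mul_assoc, ← Real.exp_add, neg_add_cancel, Real.exp_zero, one_mul]

lemma sum_prod_pi {ι : Type*} [Fintype ι] [DecidableEq ι] {κ : ι → Type*} [∀ i, Fintype (κ i)]
    [∀ i, DecidableEq (κ i)] (G : ∀ i, κ i → ℝ) :
    ∑ x : (∀ i, κ i), ∏ i, G i (x i) = ∏ i, ∑ y, G i y := by
  rw [Finset.prod_univ_sum]
  exact Finset.sum_congr Fintype.piFinset_univ fun _ _ => rfl

lemma key_bound {Q K M : ℕ} (hM : 0 < M)
    (p : Fin (Q + 1) → Fin (K + 1) → ℝ)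
    (hp0 : ∀ i k, 0 ≤ p i k) (hp1 : ∀ i, ∑ k, p i k = 1)
    (a : Fin (Q + 1) → Fin (K + 1) → ℝ) (ha : ∀ i k, 0 ≤ a i k)
    (t l : ℝ) (hl : 0 ≤ l) (hla : ∀ i k, l * a i k ≤ 1) :
    multinomialFamily (M := M) p
        {ω | t < ∑ i, ∑ k, a i k * ((mcount ω i k : ℝ) / M - p i k)} ≤
      ENNReal.ofReal (Real.exp
        (l ^ 2 * M * (∑ i, ∑ k, (a i k) ^ 2 * p i k) - l * M * t)) := by
  classical
  have hM0 : (M : ℝ) ≠ 0 := Nat.cast_ne_zero.2 hM.ne'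
  set S : Set (Fin (Q + 1) → Fin M → Fin (K + 1)) :=
    {ω | t < ∑ i, ∑ k, a i k * ((mcount ω i k : ℝ) / M - p i k)} with hS
  set W : (Fin (Q + 1) → Fin M → Fin (K + 1)) → ℝ := fun x => ∏ i, ∏ m, p i (x i m) with hWdef
  have hW0 : ∀ x, 0 ≤ W x := fun x =>
    Finset.prod_nonneg fun i _ => Finset.prod_nonneg fun m _ => hp0 i (x i m)
  set mu : Fin (Q + 1) → ℝ := fun i => ∑ k, a i k * p i k with hmudef
  set Smu : ℝ := ∑ i, mu i with hSmudef
  set Y : (Fin (Q + 1) → Fin M → Fin (K + 1)) → ℝ := fun x => ∑ i, ∑ m, a i (x i m) with hYdef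
  set F : Fin (Q + 1) → Fin (K + 1) → ℝ := fun i k => p i k * Real.exp (l * a i k) with hFdef
  set V : ℝ := ∑ i, ∑ k, (a i k) ^ 2 * p i k with hVdef
  have hcount : ∀ (x : Fin (Q + 1) → Fin M → Fin (K + 1)) i,
      ∑ k, a i k * (mcount x i k : ℝ) = ∑ m, a i (x i m) := by
    intro x i
    rw [← Finset.sum_fiberwise' Finset.univ (x i) (a i)]
    refine Finset.sum_congr rfl fun k _ => ?_
    rw [Finset.sum_const, mcount, nsmul_eq_mul, mul_comm]
  have hid : ∀ x, Y x - M * Smu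
      = M * (∑ i, ∑ k, a i k * ((mcount x i k : ℝ) / M - p i k)) := by
    intro x
    have per : ∀ i, (∑ m, a i (x i m)) - M * mu i
        = M * ∑ k, a i k * ((mcount x i k : ℝ) / M - p i k) := by
      intro i
      rw [← hcount x i, hmudef]
      rw [Finset.mul_sum, Finset.mul_sum, ← Finset.sum_sub_distrib]
      refine Finset.sum_congr rfl fun k _ => ?_
      field_simp
    calc Y x - M * Smu = ∑ i, ((∑ m, a i (x i m)) - M * mu i) := by
          rw [hSmudef, Finset.mul_sum, hYdef, ← Finset.sum_sub_distrib]
      _ = ∑ i, M * ∑ k, a i k * ((mcount x i k : ℝ) / M - p i k) :=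
          Finset.sum_congr rfl fun i _ => per i
      _ = M * (∑ i, ∑ k, a i k * ((mcount x i k : ℝ) / M - p i k)) := by
          rw [Finset.mul_sum]
  rw [multinomialFamily_apply]
  have step0 : ∀ x : Fin (Q + 1) → Fin M → Fin (K + 1),
      ∏ i, ∏ m, ENNReal.ofReal (p i (x i m)) = ENNReal.ofReal (W x) := by
    intro x
    rw [hWdef, ENNReal.ofReal_prod_of_nonneg
      (fun i _ => Finset.prod_nonneg fun m _ => hp0 i (x i m))]
    exact Finset.prod_congr rfl fun i _ =>
      (ENNReal.ofReal_prod_of_nonneg fun m _ => hp0 i (x i m)).symm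
  simp only [step0]
  rw [← ENNReal.ofReal_sum_of_nonneg fun x _ => hW0 x]
  apply ENNReal.ofReal_le_ofReal
  calc ∑ x ∈ Finset.univ.filter (· ∈ S), W x
      ≤ ∑ x ∈ Finset.univ.filter (· ∈ S), W x * Real.exp (l * (Y x - M * Smu - M * t)) := by
        refine Finset.sum_le_sum fun x hx => ?_
        have hxS : t < ∑ i, ∑ k, a i k * ((mcount x i k : ℝ) / M - p i k) :=
          (Finset.mem_filter.1 hx).2
        have harg : 0 ≤ l * (Y x - M * Smu - M * t) := by
          refine mul_nonneg hl ?_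
          have hid' := hid x
          have hMpos : (0:ℝ) < M := Nat.cast_pos.2 hM
          nlinarith [mul_pos hMpos (sub_pos.2 hxS)]
        exact le_mul_of_one_le_right (hW0 x) (Real.one_le_exp harg)
    _ ≤ ∑ x : Fin (Q + 1) → Fin M → Fin (K + 1),
          W x * Real.exp (l * (Y x - M * Smu - M * t)) :=
        Finset.sum_le_sum_of_subset_of_nonneg (Finset.filter_subset _ _)
          (fun x _ _ => mul_nonneg (hW0 x) (Real.exp_nonneg _))
    _ = ∑ x : Fin (Q + 1) → Fin M → Fin (K + 1),
          Real.exp (-(l * M * Smu) - l * M * t) * ∏ i, ∏ m, F i (x i m) := by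
        refine Finset.sum_congr rfl fun x _ => ?_
        have hexpY : Real.exp (l * Y x) = ∏ i, ∏ m, Real.exp (l * a i (x i m)) := by
          rw [show l * Y x = ∑ i, ∑ m, l * a i (x i m) by
            rw [hYdef, Finset.mul_sum]
            exact Finset.sum_congr rfl fun i _ => Finset.mul_sum _ _ _]
          rw [Real.exp_sum]
          exact Finset.prod_congr rfl fun i _ => Real.exp_sum _ _
        have hsplit : W x * Real.exp (l * (Y x - M * Smu - M * t))
            = Real.exp (-(l * M * Smu) - l * M * t) * (W x * Real.exp (l * Y x)) := by
          rw [show l * (Y x - M * Smu - M * t)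
            = (l * Y x) + (-(l * M * Smu) - l * M * t) by ring, Real.exp_add]
          ring
        rw [hsplit, hexpY]
        congr 1
        calc W x * ∏ i, ∏ m, Real.exp (l * a i (x i m))
            = ∏ i, ((∏ m, p i (x i m)) * ∏ m, Real.exp (l * a i (x i m))) :=
              Finset.prod_mul_distrib.symm
          _ = ∏ i, ∏ m, F i (x i m) :=
              Finset.prod_congr rfl fun i _ => Finset.prod_mul_distrib.symm
    _ = Real.exp (-(l * M * Smu) - l * M * t)
          * ∑ x : Fin (Q + 1) → Fin M → Fin (K + 1), ∏ i, ∏ m, F i (x i m) :=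
        (Finset.mul_sum _ _ _).symm
    _ = Real.exp (-(l * M * Smu) - l * M * t) * ∏ i, (∑ k, F i k) ^ M := by
        congr 1
        calc ∑ x : Fin (Q + 1) → Fin M → Fin (K + 1), ∏ i, ∏ m, F i (x i m)
            = ∏ i, ∑ y : Fin M → Fin (K + 1), ∏ m, F i (y m) :=
              sum_prod_pi (κ := fun _ => Fin M → Fin (K + 1)) fun i y => ∏ m, F i (y m)
          _ = ∏ i, (∑ k, F i k) ^ M := by
              refine Finset.prod_congr rfl fun i _ => ?_
              rw [sum_prod_pi (κ := fun _ : Fin M => Fin (K + 1)) fun _ k => F i k, Finset.prod_const, Finset.card_univ,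
                Fintype.card_fin]
    _ = Real.exp (-(l * M * t)) * ∏ i, (Real.exp (-(l * mu i)) * ∑ k, F i k) ^ M := by
        have hexpSmu : Real.exp (-(l * M * Smu))
            = ∏ i, Real.exp (-(l * mu i)) ^ M := by
          have e : ∑ i, (M : ℝ) * (-(l * mu i)) = -(l * M * Smu) := by
            rw [show (fun i => (M : ℝ) * (-(l * mu i))) = fun i => -((M * l) * mu i) by
              funext i; ring]
            rw [Finset.sum_neg_distrib, ← Finset.mul_sum Finset.univ mu ((M : ℝ) * l),
              ← hSmudef]
            ring
          rw [← e, Real.exp_sum]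
          exact Finset.prod_congr rfl fun i _ => by
            rw [← Real.exp_nat_mul]
        rw [show Real.exp (-(l * M * Smu) - l * M * t)
          = Real.exp (-(l * M * t)) * Real.exp (-(l * M * Smu)) by
            rw [← Real.exp_add]; congr 1; ring]
        rw [hexpSmu, mul_assoc, ← Finset.prod_mul_distrib]
        congr 1
        exact Finset.prod_congr rfl fun i _ => (mul_pow _ _ _).symm
    _ ≤ Real.exp (-(l * M * t)) * ∏ i, (Real.exp (l ^ 2 * ∑ k, (a i k) ^ 2 * p i k)) ^ M := by
        refine mul_le_mul_of_nonneg_left ?_ (Real.exp_nonneg _)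
        refine Finset.prod_le_prod (fun i _ => pow_nonneg ?_ _) (fun i _ => ?_)
        · exact mul_nonneg (Real.exp_nonneg _)
            (Finset.sum_nonneg fun k _ => mul_nonneg (hp0 i k) (Real.exp_nonneg _))
        · refine pow_le_pow_left₀ (mul_nonneg (Real.exp_nonneg _)
            (Finset.sum_nonneg fun k _ => mul_nonneg (hp0 i k) (Real.exp_nonneg _))) ?_ M
          exact factor_bound (p i) (a i) (hp0 i) (hp1 i) (ha i) l hl (hla i)
    _ = Real.exp (l ^ 2 * M * V - l * M * t) := by
        have hVe : ∏ i, (Real.exp (l ^ 2 * ∑ k, (a i k) ^ 2 * p i k)) ^ M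
            = Real.exp (l ^ 2 * M * V) := by
          have e : ∑ i, (M : ℝ) * (l ^ 2 * ∑ k, (a i k) ^ 2 * p i k) = l ^ 2 * M * V := by
            rw [show (fun i => (M : ℝ) * (l ^ 2 * ∑ k, (a i k) ^ 2 * p i k))
                = fun i => ((M : ℝ) * l ^ 2) * ∑ k, (a i k) ^ 2 * p i k by
              funext i; ring]
            rw [← Finset.mul_sum Finset.univ (fun i => ∑ k, (a i k) ^ 2 * p i k)
              ((M : ℝ) * l ^ 2), ← hVdef]
            ring
          rw [← e, Real.exp_sum]
          exact Finset.prod_congr rfl fun i _ => by rw [← Real.exp_nat_mul]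
        rw [hVe, ← Real.exp_add]
        congr 1
        ring


/-- `a_max = max_{i,k} a_{i,k}`. -/
noncomputable def amax {Q K : ℕ} (a : Fin (Q + 1) → Fin (K + 1) → ℝ) : ℝ :=
  Finset.univ.sup' Finset.univ_nonempty
    (fun ik : Fin (Q + 1) × Fin (K + 1) => a ik.1 ik.2)

/-- one-sided concentration for nonnegative linear functionals of
independent multinomial random vectors:
`P(Σ_{i,k} a_{i,k}(f_{i,k}/M − p_{i,k}) > t)
  ≤ exp(−(Mt/(2a_max)) · min{1, a_max t / (2 Σ_{i,k} a_{i,k}² p_{i,k})})`. -/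
theorem multinomial_upper_tail {Q K M : ℕ} (hM : 0 < M)
    (p : Fin (Q + 1) → Fin (K + 1) → ℝ)
    (hp0 : ∀ i k, 0 ≤ p i k) (hp1 : ∀ i, ∑ k, p i k = 1)
    (a : Fin (Q + 1) → Fin (K + 1) → ℝ) (ha : ∀ i k, 0 ≤ a i k)
    (hap : ∀ i, ∑ k, a i k * p i k ≠ 0) (hamax : 0 < amax a)
    (t : ℝ) (ht : 0 < t) :
    multinomialFamily (M := M) p
        {ω | t < ∑ i, ∑ k, a i k * ((mcount ω i k : ℝ) / M - p i k)} ≤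
      ENNReal.ofReal (Real.exp (-(M * t / (2 * amax a)) *
        min 1 (amax a * t / (2 * ∑ i, ∑ k, (a i k) ^ 2 * p i k)))) := by
  set A := amax a with hA
  set V : ℝ := ∑ i, ∑ k, (a i k) ^ 2 * p i k with hV
  have haA : ∀ i k, a i k ≤ A := fun i k =>
    Finset.le_sup' (fun ik : Fin (Q + 1) × Fin (K + 1) => a ik.1 ik.2)
      (Finset.mem_univ (i, k))
  have hMpos : (0 : ℝ) < M := Nat.cast_pos.2 hM
  have hV0 : 0 < V := by
    have h0 : 0 < ∑ k, a 0 k * p 0 k :=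
      lt_of_le_of_ne (Finset.sum_nonneg fun k _ => mul_nonneg (ha 0 k) (hp0 0 k))
        (Ne.symm (hap 0))
    obtain ⟨k0, -, hk0⟩ := Finset.exists_lt_of_sum_lt (f := fun _ => (0:ℝ))
      (g := fun k => a 0 k * p 0 k) (by simpa using h0)
    have hak : 0 < a 0 k0 := by
      rcases mul_pos_iff.1 hk0 with ⟨h1, _⟩ | ⟨h1, h2⟩
      · exact h1
      · exact absurd h1 (not_lt.2 (ha 0 k0))
    have hpk : 0 < p 0 k0 := by
      rcases mul_pos_iff.1 hk0 with ⟨_, h2⟩ | ⟨h1, _⟩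
      · exact h2
      · exact absurd h1 (not_lt.2 (ha 0 k0))
    have hterm : 0 < (a 0 k0) ^ 2 * p 0 k0 := by positivity
    have h1 : (a 0 k0) ^ 2 * p 0 k0 ≤ ∑ k, (a 0 k) ^ 2 * p 0 k :=
      Finset.single_le_sum (f := fun k => (a 0 k) ^ 2 * p 0 k)
        (fun k _ => mul_nonneg (sq_nonneg _) (hp0 0 k)) (Finset.mem_univ k0)
    have h2 : ∑ k, (a 0 k) ^ 2 * p 0 k ≤ V :=
      Finset.single_le_sum
        (fun i _ => Finset.sum_nonneg fun k _ => mul_nonneg (sq_nonneg _) (hp0 i k))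
        (Finset.mem_univ 0)
    linarith
  rcases le_or_gt (A * t) (2 * V) with hc | hc
  · -- small-deviation regime: λ = t / (2V)
    have hl : (0 : ℝ) ≤ t / (2 * V) := by positivity
    have hla : ∀ i k, (t / (2 * V)) * a i k ≤ 1 := by
      intro i k
      rw [div_mul_eq_mul_div, div_le_one (by positivity)]
      nlinarith [ha i k, (haA i k), ht.le]
    refine (key_bound hM p hp0 hp1 a ha t _ hl hla).trans ?_
    apply ENNReal.ofReal_le_ofReal
    apply Real.exp_le_exp.2
    rw [min_eq_right (by rw [div_le_one (by positivity)]; linarith)]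
    have hA0 : (0:ℝ) < A := hamax
    have hAne : A ≠ 0 := ne_of_gt hA0
    have hVne : V ≠ 0 := ne_of_gt hV0
    rw [← hV]
    refine le_of_eq ?_
    field_simp
    ring
  · -- large-deviation regime: λ = 1 / A
    have hA0 : (0:ℝ) < A := hamax
    have hl : (0 : ℝ) ≤ 1 / A := by positivity
    have hla : ∀ i k, (1 / A) * a i k ≤ 1 := by
      intro i k
      rw [div_mul_eq_mul_div, one_mul, div_le_one hA0]
      exact haA i k
    refine (key_bound hM p hp0 hp1 a ha t _ hl hla).trans ?_
    apply ENNReal.ofReal_le_ofReal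
    apply Real.exp_le_exp.2
    rw [min_eq_left (by rw [le_div_iff₀ (by positivity)]; linarith)]
    rw [← hV, mul_one]
    have hAne : A ≠ 0 := ne_of_gt hA0
    have heq : -(M * t / (2 * A)) - ((1 / A) ^ 2 * M * V - (1 / A) * M * t)
        = ((M : ℝ) / A ^ 2) * (A * t / 2 - V) := by
      field_simp
      ring
    have hpos : 0 ≤ ((M : ℝ) / A ^ 2) * (A * t / 2 - V) :=
      mul_nonneg (by positivity) (by linarith)
    linarith [heq, hpos]
end
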